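/- Let φ : [0, ∞) → [0, ∞) be a nonincreasing function, and suppose there exist μ > 0, B₀ > 0 and s₀ ≥ 0 such that for every r > 0 and every s ≥ s₀ one has r·φ(s + r) ≤ B₀·φ(s)^{1+μ}. Then φ(s) = 0 for every s ≥ s₀ + 2·B₀·φ(s₀)^{μ}/(1 − 2^{−μ}). -/

import Mathlib

/-- De Giorgi's iteration lemma. -/
theorem de_giorgi_iteration
    (φ : ℝ → ℝ)
    (hnonneg : ∀ s, 0 ≤ s → 0 ≤ φ s)
    (hmono : ∀ s t, 0 ≤ s → s ≤ t → φ t ≤ φ s)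
    (μ B₀ s₀ : ℝ) (hμ : 0 < μ) (hB₀ : 0 < B₀) (hs₀ : 0 ≤ s₀)
    (h : ∀ r > (0 : ℝ), ∀ s ≥ s₀, r * φ (s + r) ≤ B₀ * φ s ^ (1 + μ)) :
    ∀ s ≥ s₀ + 2 * B₀ * φ s₀ ^ μ / (1 - 2 ^ (-μ)), φ s = 0 := by
  intro s hs
  have hc0 : (0:ℝ) < (2:ℝ) ^ (-μ) := Real.rpow_pos_of_pos two_pos _
  have hc1 : (2:ℝ) ^ (-μ) < 1 :=
    Real.rpow_lt_one_of_one_lt_of_neg one_lt_two (neg_lt_zero.mpr hμ)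
  set c := (2:ℝ) ^ (-μ) with hcdef
  have h1c : 0 < 1 - c := by linarith
  have hM0 : 0 ≤ φ s₀ := hnonneg s₀ hs₀
  rcases eq_or_lt_of_le hM0 with hM | hM
  · -- degenerate case φ s₀ = 0
    have hz : φ s₀ ^ μ = 0 := by rw [← hM, Real.zero_rpow hμ.ne']
    have hss : s₀ ≤ s := by
      rw [hz] at hs; simpa using hs
    have h1 := hmono s₀ s hs₀ hss
    have h2 := hnonneg s (le_trans hs₀ hss)
    linarith [hM ▸ h1]
  · set M := φ s₀ with hMdef
    have hMμ : 0 < M ^ μ := Real.rpow_pos_of_pos hM μ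
    set σ : ℕ → ℝ := fun k => s₀ + 2 * B₀ * M ^ μ * ∑ j ∈ Finset.range k, c ^ j with hσdef
    have hσs₀ : ∀ k, s₀ ≤ σ k := by
      intro k
      have : (0:ℝ) ≤ 2 * B₀ * M ^ μ * ∑ j ∈ Finset.range k, c ^ j := by
        apply mul_nonneg (by positivity)
        exact Finset.sum_nonneg fun j _ => pow_nonneg hc0.le j
      simp [hσdef]; linarith
    have hσle : ∀ k, σ k ≤ s := by
      intro k
      have hsum : ∑ j ∈ Finset.range k, c ^ j ≤ 1 / (1 - c) := by
        rw [le_div_iff₀ h1c]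
        have hg := geom_sum_mul c k
        have hck : 0 ≤ c ^ k := pow_nonneg hc0.le k
        nlinarith
      have : σ k ≤ s₀ + 2 * B₀ * M ^ μ / (1 - c) := by
        simp only [hσdef]
        have := mul_le_mul_of_nonneg_left hsum (by positivity : (0:ℝ) ≤ 2 * B₀ * M ^ μ)
        rw [mul_one_div] at this
        linarith
      exact le_trans this hs
    -- half-power lemma
    have hhalf : ∀ k : ℕ, ((1/2 : ℝ) ^ k) ^ μ = c ^ k := by
      intro k
      induction k with
      | zero => simp
      | succ k ih =>
        rw [pow_succ, Real.mul_rpow (by positivity) (by norm_num), ih, pow_succ]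
        congr 1
        rw [hcdef, Real.rpow_neg (by norm_num), ← Real.inv_rpow (by norm_num)]
        norm_num
    have key : ∀ k, φ (σ k) ≤ M * (1/2 : ℝ) ^ k := by
      intro k
      induction k with
      | zero => simp [hσdef]; exact le_rfl
      | succ k ih =>
        have hrk : (0:ℝ) < 2 * B₀ * M ^ μ * c ^ k := by positivity
        have hstep := h _ hrk _ (hσs₀ k)
        have hσsucc : σ (k+1) = σ k + 2 * B₀ * M ^ μ * c ^ k := by
          simp [hσdef, Finset.sum_range_succ]; ring
        have hφnn : 0 ≤ φ (σ k) := hnonneg _ (le_trans hs₀ (hσs₀ k))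
        have hbpos : (0:ℝ) < M * (1/2:ℝ) ^ k := by positivity
        have h2 : φ (σ k) ^ (1+μ) ≤ (M * (1/2:ℝ)^k) ^ (1+μ) :=
          Real.rpow_le_rpow hφnn ih (by linarith)
        have h3 : (M * (1/2:ℝ)^k) ^ (1+μ) = (M * (1/2:ℝ)^k) * (M ^ μ * c ^ k) := by
          rw [Real.rpow_add hbpos, Real.rpow_one,
            Real.mul_rpow hM.le (by positivity), hhalf]
        rw [← hσsucc] at hstep
        have h4 : (2 * B₀ * M ^ μ * c ^ k) * φ (σ (k+1)) ≤
            B₀ * ((M * (1/2:ℝ)^k) * (M ^ μ * c ^ k)) := by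
          calc (2 * B₀ * M ^ μ * c ^ k) * φ (σ (k+1)) ≤ B₀ * φ (σ k) ^ (1+μ) := hstep
            _ ≤ B₀ * (M * (1/2:ℝ)^k) ^ (1+μ) := by nlinarith
            _ = _ := by rw [h3]
        have hck : (0:ℝ) < c ^ k := pow_pos hc0 k
        have h5 : 2 * φ (σ (k+1)) ≤ M * (1/2:ℝ)^k := by
          have hpos : (0:ℝ) < B₀ * (M ^ μ * c ^ k) := by positivity
          rw [← mul_le_mul_iff_right₀ hpos]
          nlinarith [h4]
        calc φ (σ (k+1)) ≤ M * (1/2:ℝ)^k / 2 := by linarith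
          _ = M * (1/2:ℝ)^(k+1) := by ring
    have hφs : ∀ k, φ s ≤ M * (1/2:ℝ) ^ k := fun k =>
      le_trans (hmono (σ k) s (le_trans hs₀ (hσs₀ k)) (hσle k)) (key k)
    have htend : Filter.Tendsto (fun k : ℕ => M * (1/2:ℝ) ^ k) Filter.atTop (nhds 0) := by
      have := (tendsto_pow_atTop_nhds_zero_of_lt_one (by norm_num : (0:ℝ) ≤ 1/2)
        (by norm_num : (1/2:ℝ) < 1)).const_mul M
      simpa using this
    have hle0 : φ s ≤ 0 := ge_of_tendsto' htend hφs
    have hge0 : 0 ≤ φ s := hnonneg s (le_trans hs₀ (le_trans (hσs₀ 0) (hσle 0)))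
    linarith
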